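/- For any polynomial f in k[x_0,...,x_m] over an algebraic extension k of F_q, the projective reduction f̄ of f is zero if and only if f lies in the ideal Γ_q(k) generated by the Fermat polynomials x_i^q x_j - x_i x_j^q, 0 ≤ i < j ≤ m. -/

import Mathlib

open MvPolynomial Finset

/-- Reduce an exponent modulo `q-1`: unchanged if `≤ q-1`, otherwise the
representative in `{1,...,q-1}` congruent to it modulo `q-1`. -/
def redExp (q a : ℕ) : ℕ := if a ≤ q - 1 then a else (a - 1) % (q - 1) + 1

/-- Projective reduction of a monomial (given by its exponent vector): all exponents
below the top variable of the support are reduced modulo `q-1`, and the difference is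
transferred to the exponent of the top variable. -/
noncomputable def projRed (q : ℕ) {m : ℕ} (μ : Fin (m + 1) →₀ ℕ) : Fin (m + 1) →₀ ℕ :=
  if h : μ.support.Nonempty then
    letI ℓ := μ.support.max' h
    Finsupp.equivFunOnFinite.symm fun i =>
      if i < ℓ then redExp q (μ i)
      else if i = ℓ then μ ℓ + ∑ j ∈ Finset.univ.filter (· < ℓ), (μ j - redExp q (μ j))
      else 0
  else 0

/-- Projective reduction of a polynomial: the linear extension of projective
reduction of monomials. -/
noncomputable def polyRed (q : ℕ) {m : ℕ} {k : Type} [CommRing k]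
    (f : MvPolynomial (Fin (m + 1)) k) : MvPolynomial (Fin (m + 1)) k :=
  f.support.sum fun μ => monomial (projRed q μ) (coeff μ f)

/-- The ideal generated by the Fermat polynomials `X i ^ q * X j - X i * X j ^ q`. -/
noncomputable def fermatIdeal (q m : ℕ) (k : Type) [CommRing k] : Ideal (MvPolynomial (Fin (m + 1)) k) :=
  Ideal.span {f | ∃ i j : Fin (m + 1), i < j ∧ f = X i ^ q * X j - X i * X j ^ q}

/-- The leading exponent (exponent vector of the leading monomial) of a multivariate
polynomial with respect to a monomial order. -/
noncomputable def lmExp {σ : Type} (mo : MonomialOrder σ) {R : Type} [CommSemiring R]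
    (f : MvPolynomial σ R) : σ →₀ ℕ :=
  mo.toSyn.symm (f.support.sup fun μ => mo.toSyn μ)

lemma redExp_le (q a : ℕ) : redExp q a ≤ a := by
  unfold redExp; split_ifs with h
  · exact le_rfl
  · have := Nat.mod_le (a - 1) (q - 1); omega

lemma redExp_add_one (q : ℕ) (h2 : 2 ≤ q) (a : ℕ) : redExp q (a + 1) = a % (q - 1) + 1 := by
  unfold redExp; split_ifs with h
  · have : a % (q - 1) = a := Nat.mod_eq_of_lt (by omega)
    omega
  · simp

lemma redExp_add_q (q : ℕ) (h2 : 2 ≤ q) (a : ℕ) : redExp q (a + q) = a % (q - 1) + 1 := by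
  unfold redExp
  rw [if_neg (by omega), show a + q - 1 = a + (q - 1) by omega, Nat.add_mod_right]

lemma redExp_q_one (q : ℕ) (h2 : 2 ≤ q) (a : ℕ) : redExp q (a + q) = redExp q (a + 1) := by
  rw [redExp_add_q q h2, redExp_add_one q h2]

lemma projRed_apply (q : ℕ) {m : ℕ} (μ : Fin (m + 1) →₀ ℕ) (hne : μ.support.Nonempty)
    (t : Fin (m + 1)) :
    projRed q μ t =
      if t < μ.support.max' hne then redExp q (μ t)
      else if t = μ.support.max' hne then
        μ (μ.support.max' hne) + ∑ j ∈ Finset.univ.filter (· < μ.support.max' hne),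
          (μ j - redExp q (μ j))
      else 0 := by
  unfold projRed
  rw [dif_pos hne]
  rfl

lemma topVal (q : ℕ) {m : ℕ} (μ : Fin (m + 1) →₀ ℕ) (hne : μ.support.Nonempty)
    (ℓ : Fin (m + 1)) (hℓ : μ.support.max' hne = ℓ) :
    μ ℓ + ∑ j ∈ Finset.univ.filter (· < ℓ), (μ j - redExp q (μ j))
      = (∑ j, μ j) - ∑ j ∈ Finset.univ.filter (· < ℓ), redExp q (μ j) := by
  have hsub : ∑ j ∈ Finset.univ.filter (· < ℓ), (μ j - redExp q (μ j))
      = ∑ j ∈ Finset.univ.filter (· < ℓ), μ j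
        - ∑ j ∈ Finset.univ.filter (· < ℓ), redExp q (μ j) :=
    Finset.sum_tsub_distrib _ (fun x _ => redExp_le q (μ x))
  have hsplit : ∑ j ∈ Finset.univ.filter (fun j => j < ℓ), μ j
      + ∑ j ∈ Finset.univ.filter (fun j => ¬ j < ℓ), μ j = ∑ j, μ j :=
    Finset.sum_filter_add_sum_filter_not _ _ _
  have hrest : ∑ j ∈ Finset.univ.filter (fun j => ¬ j < ℓ), μ j = μ ℓ := by
    apply Finset.sum_eq_single_of_mem
    · simp
    · intro t ht hne'
      have htℓ : ¬ t < ℓ := (Finset.mem_filter.mp ht).2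
      by_contra h0
      have : t ∈ μ.support := Finsupp.mem_support_iff.mpr h0
      have := Finset.le_max' _ t this
      rw [hℓ] at this
      exact hne' (le_antisymm this (not_lt.mp htℓ))
  have hle : ∑ j ∈ Finset.univ.filter (· < ℓ), redExp q (μ j)
      ≤ ∑ j ∈ Finset.univ.filter (· < ℓ), μ j :=
    Finset.sum_le_sum (fun x _ => redExp_le q (μ x))
  omega

lemma projRed_congr (q : ℕ) {m : ℕ} {μ ν : Fin (m + 1) →₀ ℕ} (hs : μ.support = ν.support)
    (hne : μ.support.Nonempty) (hsum : ∑ t, μ t = ∑ t, ν t)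
    (hred : ∀ t, t < μ.support.max' hne → redExp q (μ t) = redExp q (ν t)) :
    projRed q μ = projRed q ν := by
  have hne' : ν.support.Nonempty := hs ▸ hne
  have hmax : ν.support.max' hne' = μ.support.max' hne := by
    apply le_antisymm
    · exact Finset.max'_le _ _ _ (fun t ht => Finset.le_max' _ t (hs ▸ ht))
    · exact Finset.max'_le _ _ _ (fun t ht => Finset.le_max' _ t (hs ▸ ht))
  set ℓ := μ.support.max' hne with hℓdef
  ext t
  rw [projRed_apply q μ hne t, projRed_apply q ν hne' t, hmax]
  by_cases h1 : t < ℓ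
  · rw [if_pos h1, if_pos h1]
    exact hred t h1
  · rw [if_neg h1, if_neg h1]
    by_cases h2 : t = ℓ
    · rw [if_pos h2, if_pos h2]
      rw [topVal q μ hne ℓ rfl, topVal q ν hne' ℓ hmax, hsum]
      congr 1
      exact Finset.sum_congr rfl (fun x hx => hred x (Finset.mem_filter.mp hx).2)
    · rw [if_neg h2, if_neg h2]

lemma projRed_fixed (q : ℕ) {m : ℕ} (μ : Fin (m + 1) →₀ ℕ) (hne : μ.support.Nonempty)
    (hred : ∀ t, t < μ.support.max' hne → redExp q (μ t) = μ t) :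
    projRed q μ = μ := by
  set ℓ := μ.support.max' hne with hℓdef
  ext t
  rw [projRed_apply q μ hne t]
  by_cases h1 : t < ℓ
  · rw [if_pos h1]; exact hred t h1
  · rw [if_neg h1]
    by_cases h2 : t = ℓ
    · rw [if_pos h2, Finset.sum_eq_zero, add_zero, h2]
      intro x hx
      rw [hred x (Finset.mem_filter.mp hx).2]
      omega
    · rw [if_neg h2]
      by_contra h0
      have : t ∈ μ.support := Finsupp.mem_support_iff.mpr (fun hh => h0 hh.symm)
      have := Finset.le_max' _ t this
      exact h2 (le_antisymm this (not_lt.mp h1))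

lemma projRed_swap (q : ℕ) (h2 : 2 ≤ q) {m : ℕ} (τ : Fin (m + 1) →₀ ℕ)
    {i j : Fin (m + 1)} (hij : i < j) :
    projRed q (τ + Finsupp.single i q + Finsupp.single j 1)
      = projRed q (τ + Finsupp.single i 1 + Finsupp.single j q) := by
  have hne_ij : i ≠ j := ne_of_lt hij
  set μ := τ + Finsupp.single i q + Finsupp.single j 1 with hμ
  set ν := τ + Finsupp.single i 1 + Finsupp.single j q with hν
  have happ : ∀ t, μ t = τ t + (if i = t then q else 0) + (if j = t then 1 else 0) := by
    intro t; simp [hμ, Finsupp.single_apply]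
  have happ' : ∀ t, ν t = τ t + (if i = t then 1 else 0) + (if j = t then q else 0) := by
    intro t; simp [hν, Finsupp.single_apply]
  have hs : μ.support = ν.support := by
    ext t
    simp only [Finsupp.mem_support_iff, happ, happ']
    split_ifs <;> omega
  have hne : μ.support.Nonempty := by
    refine ⟨j, Finsupp.mem_support_iff.mpr ?_⟩
    rw [happ j, if_neg hne_ij, if_pos rfl]
    omega
  have hsumaux : ∀ c d : ℕ,
      ∑ t, (τ t + (if i = t then c else 0) + (if j = t then d else 0))
        = (∑ t, τ t) + c + d := by
    intro c d
    rw [Finset.sum_add_distrib, Finset.sum_add_distrib]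
    simp [Finset.sum_ite_eq]
  have hsum : ∑ t, μ t = ∑ t, ν t := by
    calc ∑ t, μ t = (∑ t, τ t) + q + 1 := by
            rw [← hsumaux q 1]; exact Finset.sum_congr rfl (fun t _ => happ t)
      _ = (∑ t, τ t) + 1 + q := by omega
      _ = ∑ t, ν t := by
            rw [← hsumaux 1 q]; exact (Finset.sum_congr rfl (fun t _ => happ' t)).symm
  have hred : ∀ t, t < μ.support.max' hne → redExp q (μ t) = redExp q (ν t) := by
    intro t _
    by_cases h1 : t = i
    · subst h1
      have hnj : ¬ j = t := fun h => hne_ij h.symm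
      simp only [happ t, happ' t, if_pos (rfl : t = t), if_neg hnj, add_zero]
      exact redExp_q_one q h2 (τ t)
    · by_cases h3 : t = j
      · subst h3
        simp only [happ t, happ' t, if_neg hne_ij, if_pos (rfl : t = t), zero_add]
        exact (redExp_q_one q h2 (τ t)).symm
      · have hni : ¬ i = t := fun h => h1 h.symm
        have hnj : ¬ j = t := fun h => h3 h.symm
        simp only [happ t, happ' t, if_neg hni, if_neg hnj]
  exact projRed_congr q hs hne hsum hred

lemma gen_mem (q m : ℕ) (k : Type) [CommRing k] {s ℓ : Fin (m + 1)} (h : s < ℓ) :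
    (X s ^ q * X ℓ - X s * X ℓ ^ q : MvPolynomial (Fin (m + 1)) k) ∈ fermatIdeal q m k :=
  Ideal.subset_span ⟨s, ℓ, h, rfl⟩

lemma monomial_mul_gen (q m : ℕ) {k : Type} [CommRing k] (τ : Fin (m + 1) →₀ ℕ) (c : k)
    (s ℓ : Fin (m + 1)) :
    monomial (τ + Finsupp.single s q + Finsupp.single ℓ 1) c
      - monomial (τ + Finsupp.single s 1 + Finsupp.single ℓ q) c
      = monomial τ c * (X s ^ q * X ℓ - X s * X ℓ ^ q) := by
  have hX : ∀ (v : Fin (m + 1)), (X v : MvPolynomial (Fin (m + 1)) k)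
      = monomial (Finsupp.single v 1) 1 := fun v => rfl
  rw [mul_sub, X_pow_eq_monomial, X_pow_eq_monomial, hX s, hX ℓ, monomial_mul, monomial_mul,
    monomial_mul, monomial_mul]
  simp [add_assoc]

lemma reduce_mem_zero (q m : ℕ) {k : Type} [CommRing k] (μ : Fin (m + 1) →₀ ℕ) (c : k)
    (hne : μ.support.Nonempty)
    (hz : ∀ t ∈ Finset.univ.filter (· < μ.support.max' hne), μ t - redExp q (μ t) = 0) :
    monomial μ c - monomial (projRed q μ) c ∈ fermatIdeal q m k := by
  have : projRed q μ = μ := by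
    apply projRed_fixed q μ hne
    intro t ht
    have := hz t (Finset.mem_filter.mpr ⟨Finset.mem_univ t, ht⟩)
    have := redExp_le q (μ t)
    omega
  rw [this, sub_self]
  exact (fermatIdeal q m k).zero_mem

lemma reduce_mem (q m : ℕ) {k : Type} [CommRing k] (h2 : 2 ≤ q) :
    ∀ (n : ℕ) (μ : Fin (m + 1) →₀ ℕ) (c : k) (hne : μ.support.Nonempty),
      (∑ t ∈ Finset.univ.filter (· < μ.support.max' hne), (μ t - redExp q (μ t))) ≤ n →
      monomial μ c - monomial (projRed q μ) c ∈ fermatIdeal q m k := by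
  intro n
  induction n with
  | zero =>
    intro μ c hne hm
    apply reduce_mem_zero q m μ c hne
    intro t ht
    have h1 : ∀ t ∈ Finset.univ.filter (· < μ.support.max' hne), μ t - redExp q (μ t) = 0 := by
      intro x hx
      by_contra h0
      have : 0 < ∑ t ∈ Finset.univ.filter (· < μ.support.max' hne), (μ t - redExp q (μ t)) :=
        Finset.sum_pos' (fun _ _ => Nat.zero_le _) ⟨x, hx, Nat.pos_of_ne_zero h0⟩
      omega
    exact h1 t ht
  | succ n ih =>
    intro μ c hne hm
    set ℓ := μ.support.max' hne with hℓdef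
    by_cases hz : ∀ t ∈ Finset.univ.filter (· < ℓ), μ t - redExp q (μ t) = 0
    · exact reduce_mem_zero q m μ c hne hz
    · push_neg at hz
      obtain ⟨s, hsmem, hsne⟩ := hz
      have hslt : s < ℓ := (Finset.mem_filter.mp hsmem).2
      have hsq : q ≤ μ s := by
        by_contra h
        have hle : μ s ≤ q - 1 := by omega
        have : redExp q (μ s) = μ s := by unfold redExp; rw [if_pos hle]
        omega
      have hℓmem : ℓ ∈ μ.support := μ.support.max'_mem hne
      have hℓ1 : 1 ≤ μ ℓ := Nat.pos_of_ne_zero (Finsupp.mem_support_iff.mp hℓmem)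
      have hsl : s ≠ ℓ := ne_of_lt hslt
      -- the swapped monomial
      set τ : Fin (m + 1) →₀ ℕ := Finsupp.equivFunOnFinite.symm
        (fun t => if t = s then μ s - q else if t = ℓ then μ ℓ - 1 else μ t) with hτdef
      have hτapp : ∀ t, τ t = if t = s then μ s - q else if t = ℓ then μ ℓ - 1 else μ t :=
        fun t => rfl
      set μ' := τ + Finsupp.single s 1 + Finsupp.single ℓ q with hμ'def
      have hnls : ¬ ℓ = s := fun h => hsl h.symm
      have hnsl : ¬ s = ℓ := hsl
      have hμdecomp : μ = τ + Finsupp.single s q + Finsupp.single ℓ 1 := by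
        ext t
        rcases eq_or_ne t s with h1 | h1
        · rw [h1]
          simp [Finsupp.add_apply, hτapp, Finsupp.single_apply, hnls]
          omega
        · rcases eq_or_ne t ℓ with hh2 | hh2
          · rw [hh2]
            simp [Finsupp.add_apply, hτapp, Finsupp.single_apply, hnls, hnsl]
            omega
          · simp [Finsupp.add_apply, hτapp, Finsupp.single_apply, h1, hh2,
              (show ¬ s = t from fun h => h1 h.symm),
              (show ¬ ℓ = t from fun h => hh2 h.symm)]
      have hμ'app : ∀ t, μ' t = if t = s then μ s - q + 1
          else if t = ℓ then μ ℓ - 1 + q else μ t := by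
        intro t
        rw [hμ'def]
        rcases eq_or_ne t s with h1 | h1
        · rw [h1]
          simp [Finsupp.add_apply, hτapp, Finsupp.single_apply, hnls]
        · rcases eq_or_ne t ℓ with hh2 | hh2
          · rw [hh2]
            simp [Finsupp.add_apply, hτapp, Finsupp.single_apply, hnls, hnsl]
          · simp [Finsupp.add_apply, hτapp, Finsupp.single_apply, h1, hh2,
              (show ¬ s = t from fun h => h1 h.symm),
              (show ¬ ℓ = t from fun h => hh2 h.symm)]
      have hswap : projRed q μ = projRed q μ' := by
        rw [hμdecomp, hμ'def]
        exact projRed_swap q h2 τ hslt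
      have hne' : μ'.support.Nonempty := by
        refine ⟨ℓ, Finsupp.mem_support_iff.mpr ?_⟩
        rw [hμ'app ℓ, if_neg (fun h => hsl h.symm), if_pos rfl]
        omega
      have hmax' : μ'.support.max' hne' = ℓ := by
        apply le_antisymm
        · apply Finset.max'_le
          intro t ht
          by_contra hlt
          have htℓ : ℓ < t := not_le.mp hlt
          have h1 : t ≠ s := fun h => absurd (h ▸ htℓ) (not_lt.mpr (le_of_lt hslt))
          have h2' : t ≠ ℓ := fun h => absurd (h ▸ htℓ) (lt_irrefl ℓ)
          have hμt : μ t = 0 := by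
            by_contra h0
            have := Finset.le_max' _ t (Finsupp.mem_support_iff.mpr h0)
            rw [← hℓdef] at this
            exact absurd htℓ (not_lt.mpr this)
          have : μ' t = 0 := by rw [hμ'app t, if_neg h1, if_neg h2', hμt]
          exact (Finsupp.mem_support_iff.mp ht) this
        · apply Finset.le_max'
          refine Finsupp.mem_support_iff.mpr ?_
          rw [hμ'app ℓ, if_neg (fun h => hsl h.symm), if_pos rfl]
          omega
      have hred2 : redExp q (μ s - q + 1) = redExp q (μ s) := by
        have e2 : μ s = (μ s - q) + q := by omega
        rw [show μ s - q + 1 = (μ s - q) + 1 from rfl, ← redExp_q_one q h2 (μ s - q), ← e2]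
      have hmeas : ∑ t ∈ Finset.univ.filter (· < ℓ), (μ' t - redExp q (μ' t)) ≤ n := by
        rw [← Finset.add_sum_erase _ _ hsmem] at hm ⊢
        have hsame : ∑ t ∈ (Finset.univ.filter (· < ℓ)).erase s, (μ' t - redExp q (μ' t))
            = ∑ t ∈ (Finset.univ.filter (· < ℓ)).erase s, (μ t - redExp q (μ t)) := by
          apply Finset.sum_congr rfl
          intro t ht
          have h1 : t ≠ s := Finset.ne_of_mem_erase ht
          have h2' : t ≠ ℓ := ne_of_lt (Finset.mem_filter.mp (Finset.mem_of_mem_erase ht)).2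
          rw [hμ'app t, if_neg h1, if_neg h2']
        rw [hsame]
        have hμ's : μ' s = μ s - q + 1 := by rw [hμ'app s, if_pos rfl]
        have hr1 : redExp q (μ s) ≤ μ s - q + 1 := by
          rw [← hred2]; exact redExp_le q (μ s - q + 1)
        rw [hμ's, hred2]
        omega
      have hstep : monomial μ c - monomial μ' c ∈ fermatIdeal q m k := by
        rw [hμdecomp, hμ'def, monomial_mul_gen]
        exact Ideal.mul_mem_left _ _ (gen_mem q m k hslt)
      have hfilter : Finset.univ.filter (· < μ'.support.max' hne') =
          Finset.univ.filter (· < ℓ) := by rw [hmax']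
      have hrest := ih μ' c hne' (by rw [hfilter]; exact hmeas)
      have hsplit : monomial μ c - monomial (projRed q μ) c
          = (monomial μ c - monomial μ' c)
            + (monomial μ' c - monomial (projRed q μ') c) := by
        rw [hswap]; ring
      rw [hsplit]
      exact Ideal.add_mem _ hstep hrest

lemma polyRed_eq_mapDomain (q m : ℕ) {k : Type} [CommRing k]
    (f : MvPolynomial (Fin (m + 1)) k) :
    polyRed q f = AddMonoidAlgebra.mapDomain (projRed q) f := by
  rw [AddMonoidAlgebra.mapDomain, Finsupp.mapDomain, Finsupp.sum, AddMonoidAlgebra.ofCoeff_sum]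
  exact Finset.sum_congr rfl fun μ _ => rfl

/-- Over an algebraic extension `k` of `F_q`, the projective reduction of a polynomial is
zero iff the polynomial lies in the ideal generated by the Fermat polynomials. -/
theorem polyRed_eq_zero_iff (q m : ℕ)
    (Fq : Type) [Field Fq] [Fintype Fq] (hq : Fintype.card Fq = q)
    (k : Type) [Field k] [Algebra Fq k] [Algebra.IsAlgebraic Fq k]
    (f : MvPolynomial (Fin (m + 1)) k) :
    polyRed q f = 0 ↔ f ∈ fermatIdeal q m k := by
  have h2 : 2 ≤ q := hq ▸ Fintype.one_lt_card
  have hadd : ∀ a b : MvPolynomial (Fin (m + 1)) k,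
      polyRed q (a + b) = polyRed q a + polyRed q b := by
    intro a b
    rw [polyRed_eq_mapDomain, polyRed_eq_mapDomain, polyRed_eq_mapDomain]
    exact AddMonoidAlgebra.mapDomain_add _ _ _
  have hzero : polyRed q (0 : MvPolynomial (Fin (m + 1)) k) = 0 := by
    rw [polyRed_eq_mapDomain]
    exact AddMonoidAlgebra.mapDomain_zero _
  have hmono : ∀ (μ : Fin (m + 1) →₀ ℕ) (c : k),
      polyRed q (monomial μ c) = monomial (projRed q μ) c := by
    intro μ c
    rw [polyRed_eq_mapDomain, ← single_eq_monomial, AddMonoidAlgebra.mapDomain_single,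
      single_eq_monomial]
  have hsub : ∀ a b : MvPolynomial (Fin (m + 1)) k,
      polyRed q (a - b) = polyRed q a - polyRed q b := by
    intro a b
    have h := hadd (a - b) b
    rw [sub_add_cancel] at h
    exact eq_sub_of_add_eq h.symm
  have hsum : ∀ (s : Finset (Fin (m + 1) →₀ ℕ))
      (F : (Fin (m + 1) →₀ ℕ) → MvPolynomial (Fin (m + 1)) k),
      polyRed q (∑ a ∈ s, F a) = ∑ a ∈ s, polyRed q (F a) := by
    intro s F
    induction s using Finset.induction with
    | empty => simpa using hzero
    | insert _ _ hx ih =>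
      rw [Finset.sum_insert hx, Finset.sum_insert hx, hadd, ih]
  have hdiff : f - polyRed q f ∈ fermatIdeal q m k := by
    have hrepr : f - polyRed q f
        = ∑ μ ∈ f.support, (monomial μ (coeff μ f) - monomial (projRed q μ) (coeff μ f)) := by
      rw [Finset.sum_sub_distrib, support_sum_monomial_coeff]
      rfl
    rw [hrepr]
    apply Ideal.sum_mem
    intro μ _
    by_cases hne : μ.support.Nonempty
    · exact reduce_mem q m h2 _ μ _ hne le_rfl
    · have hμ0 : μ = 0 := by
        rw [← Finsupp.support_eq_empty]
        exact Finset.not_nonempty_iff_eq_empty.mp hne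
      have hpr : projRed q μ = μ := by
        subst hμ0
        unfold projRed
        rw [dif_neg hne]
      rw [hpr, sub_self]
      exact (fermatIdeal q m k).zero_mem
  constructor
  · intro h0
    have : f = f - polyRed q f := by rw [h0, sub_zero]
    rw [this]
    exact hdiff
  · intro hf
    have key : ∀ r : MvPolynomial (Fin (m + 1)) k, polyRed q (r * f) = 0 := by
      refine Submodule.span_induction
        (p := fun x _ => ∀ r : MvPolynomial (Fin (m + 1)) k, polyRed q (r * x) = 0)
        ?_ ?_ ?_ ?_ hf
      · rintro x ⟨i, j, hij, rfl⟩ r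
        conv_lhs => rw [← support_sum_monomial_coeff r, Finset.sum_mul]
        rw [hsum]
        apply Finset.sum_eq_zero
        intro μ _
        rw [← monomial_mul_gen, hsub, hmono, hmono, projRed_swap q h2 μ hij, sub_self]
      · intro r
        rw [mul_zero]
        exact hzero
      · intro x y _ _ hx hy r
        rw [mul_add, hadd, hx, hy, add_zero]
      · intro a x _ hx r
        rw [smul_eq_mul, ← mul_assoc]
        exact hx (r * a)
    have h1 := key 1
    rwa [one_mul] at h1
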